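/- Fix a sequence (ℓₘ)ₘ∈ℕ of injective functions ℓₘ : ℕ → A whose images are pairwise disjoint. Then for every h : ℕ → Bool, the set D_h = {(n', f) ∈ P : ∃ n < n', ∃ m ∈ ℕ, ∀ k ∈ ℕ, f (ℓₘ k) n = h k} is dense in P. -/

import Mathlib

/-- `Pcond A n` is the set of forcing conditions of length `n`: functions
`f : A → (Fin n → Bool)` such that the set of `a` where some coordinate of
`f a` is `false` is countable, and every `t : Fin n → Bool` is attained by
`f` on an infinite set. -/
def Pcond (A : Type*) (n : ℕ) : Set (A → Fin n → Bool) :=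
  {f | {a : A | ∃ k : Fin n, f a k = false}.Countable ∧
       ∀ t : Fin n → Bool, {a : A | f a = t}.Infinite}

/-- The forcing `P = ⋃ₙ Pₙ`: pairs `(n, f)` with `f ∈ Pcond A n`. -/
structure ForcingCond (A : Type*) where
  n : ℕ
  f : A → Fin n → Bool
  mem : f ∈ Pcond A n

/-- `p` is stronger than (or equal to) `q`: `q.n ≤ p.n` and `p.f` agrees with
`q.f` on all coordinates `k < q.n`. -/
def Stronger {A : Type*} (p q : ForcingCond A) : Prop :=
  ∃ h : q.n ≤ p.n, ∀ (a : A) (k : Fin q.n), p.f a (Fin.castLE h k) = q.f a k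

/-- Given a sequence `(ℓₘ)` of injective functions `ℕ → A` with pairwise
disjoint images, for every `h : ℕ → Bool` the set
`D_h = {(n', f) ∈ P : ∃ n < n', ∃ m, ∀ k, f (ℓₘ k) n = h k}` is dense in `P`. -/
lemma split_infinite {A : Type*} {S : Set A} (hS : S.Infinite) :
    ∃ E : Set A, E ⊆ S ∧ E.Countable ∧ E.Infinite ∧ (S \ E).Infinite := by
  classical
  let e := hS.natEmbedding
  refine ⟨Set.range (fun k => (e (2 * k) : A)), ?_, Set.countable_range _, ?_, ?_⟩
  · rintro x ⟨k, rfl⟩; exact (e (2 * k)).2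
  · exact Set.infinite_range_of_injective (fun i j hij => by
      have := e.injective (Subtype.ext hij); omega)
  · apply Set.Infinite.mono (s := Set.range (fun k => (e (2 * k + 1) : A)))
    · rintro x ⟨k, rfl⟩
      refine ⟨(e (2 * k + 1)).2, ?_⟩
      rintro ⟨j, hj⟩
      have := e.injective (Subtype.ext hj)
      omega
    · exact Set.infinite_range_of_injective (fun i j hij => by
        have := e.injective (Subtype.ext hij); omega)

theorem Dh_dense (A : Type*) (hA : ¬ (Set.univ : Set A).Countable)
    (ℓ : ℕ → ℕ → A) (hinj : ∀ m : ℕ, Function.Injective (ℓ m))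
    (hdisj : ∀ m m' : ℕ, m ≠ m' → Disjoint (Set.range (ℓ m)) (Set.range (ℓ m')))
    (h : ℕ → Bool) :
    ∀ p : ForcingCond A, ∃ q : ForcingCond A,
      (∃ n : Fin q.n, ∃ m : ℕ, ∀ k : ℕ, q.f (ℓ m k) n = h k) ∧ Stronger q p := by
  classical
  intro p
  obtain ⟨hB, hfib⟩ := p.mem
  set F : (Fin p.n → Bool) → Set A := fun t => {a : A | p.f a = t} with hF
  -- find a good m
  have hgood : ∃ m : ℕ, ∀ t : Fin p.n → Bool, (F t \ Set.range (ℓ m)).Infinite := by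
    by_contra hc
    push_neg at hc
    choose T hT using hc
    have hTfin : ∀ m, (F (T m) \ Set.range (ℓ m)).Finite := fun m => by
      have := hT m; exact this
    obtain ⟨m, m', hne, heq⟩ := Finite.exists_ne_map_eq_of_infinite T
    have hsub : F (T m) ⊆ (F (T m) \ Set.range (ℓ m)) ∪ (F (T m) \ Set.range (ℓ m')) := by
      intro a ha
      by_cases hm : a ∈ Set.range (ℓ m)
      · right
        refine ⟨ha, fun hm' => ?_⟩
        exact (hdisj m m' hne).le_bot ⟨hm, hm'⟩
      · left; exact ⟨ha, hm⟩
    have : (F (T m)).Finite := by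
      refine Set.Finite.subset ((hTfin m).union ?_) hsub
      rw [heq]; exact hTfin m'
    exact hfib (T m) this
  obtain ⟨m, hG⟩ := hgood
  set R := Set.range (ℓ m) with hR
  choose E hE1 hE2 hE3 hE4 using fun t => split_infinite (hG t)
  -- the new coordinate
  set g : A → Bool := fun a =>
    if a ∈ R then h (Function.invFun (ℓ m) a)
    else if a ∈ E (p.f a) then false else true with hg
  have hginv : ∀ k, g (ℓ m k) = h k := by
    intro k
    simp only [hg]
    rw [if_pos (Set.mem_range_self k), Function.leftInverse_invFun (hinj m) k]
  have hgE : ∀ {t a}, a ∈ E t → p.f a = t ∧ a ∉ R ∧ g a = false := by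
    intro t a ha
    have h1 : a ∈ F t \ R := hE1 t ha
    have hpf : p.f a = t := h1.1
    refine ⟨hpf, h1.2, ?_⟩
    simp only [hg]
    rw [if_neg h1.2, if_pos (by rwa [hpf])]
  have hgT : ∀ {t a}, a ∈ (F t \ R) \ E t → p.f a = t ∧ g a = true := by
    intro t a ha
    have hpf : p.f a = t := ha.1.1
    refine ⟨hpf, ?_⟩
    simp only [hg]
    rw [if_neg ha.1.2, if_neg (by rw [hpf]; exact ha.2)]
  refine ⟨⟨p.n + 1, fun a => Fin.snoc (p.f a) (g a), ?_, ?_⟩, ?_, ?_⟩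
  · -- countability
    apply Set.Countable.mono ?_
      (hB.union ((Set.countable_range (ℓ m)).union
        (Set.countable_iUnion (fun t => hE2 t))))
    rintro a ⟨k, hk⟩
    rcases Fin.eq_castSucc_or_eq_last k with ⟨j, rfl⟩ | rfl
    · left; exact ⟨j, by simpa only [Fin.snoc_castSucc] using hk⟩
    · simp only [Fin.snoc_last] at hk
      by_cases hr : a ∈ R
      · right; left; exact hr
      · right; right
        by_cases he : a ∈ E (p.f a)
        · exact Set.mem_iUnion.2 ⟨p.f a, he⟩
        · exfalso
          simp only [hg] at hk
          rw [if_neg hr, if_neg he] at hk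
          exact absurd hk (by simp)
  · -- every value attained on an infinite set
    intro t
    have ht : Fin.snoc (Fin.init t) (t (Fin.last p.n)) = t := Fin.snoc_init_self t
    cases hb : t (Fin.last p.n) with
    | false =>
      apply (hE3 (Fin.init t)).mono
      intro a ha
      obtain ⟨hpf, _, hgf⟩ := hgE ha
      show Fin.snoc (p.f a) (g a) = t
      rw [hpf, hgf, ← hb]; exact ht
    | true =>
      apply (hE4 (Fin.init t)).mono
      intro a ha
      obtain ⟨hpf, hgt⟩ := hgT ha
      show Fin.snoc (p.f a) (g a) = t
      rw [hpf, hgt, ← hb]; exact ht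
  · exact ⟨Fin.last p.n, m, fun k => by
      change (Fin.snoc (p.f (ℓ m k)) (g (ℓ m k)) : Fin (p.n + 1) → Bool) (Fin.last p.n) = h k
      rw [Fin.snoc_last]; exact hginv k⟩
  · refine ⟨Nat.le_succ p.n, fun a k => ?_⟩
    change (Fin.snoc (p.f a) (g a) : Fin (p.n + 1) → Bool) (Fin.castLE (Nat.le_succ p.n) k) = p.f a k
    have hcast : Fin.castLE (Nat.le_succ p.n) k = Fin.castSucc k := rfl
    rw [hcast, Fin.snoc_castSucc]
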